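/- If ρ is a root of a powered polynomial f ∈ ℂ[x] with f(0) ≠ 0, then for every n ∈ ℕ, ρ^n is also a root of f and its multiplicity in f is at least the multiplicity of ρ in f. -/
import Mathlib

open Polynomial

theorem stmt16 (f : Polynomial ℂ) (h0 : f.eval 0 ≠ 0)
    (hpow : ∀ i : ℕ, 0 < i → f ∣ f.comp (Polynomial.X ^ i))
    (ρ : ℂ) (hρ : f.IsRoot ρ) :
    ∀ n : ℕ, 0 < n →
      f.IsRoot (ρ ^ n) ∧
      Polynomial.rootMultiplicity ρ f ≤ Polynomial.rootMultiplicity (ρ ^ n) f := by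
  intro n hn
  have hf0 : f ≠ 0 := fun h => h0 (by simp [h])
  have hρ0 : ρ ≠ 0 := fun h => h0 (by simpa [h] using hρ)
  obtain ⟨g, hg⟩ := hpow n hn
  have hcomp0 : f.comp (X ^ n) ≠ 0 := fun h => h0 (by
    have := congrArg (Polynomial.eval 0) h
    simpa [eval_comp, zero_pow hn.ne'] using this)
  have hroot : f.IsRoot (ρ ^ n) := by
    have := congrArg (Polynomial.eval ρ) hg
    simp only [eval_comp, eval_pow, eval_X, eval_mul, hρ.eq_zero, zero_mul] at this
    exact this
  refine ⟨hroot, ?_⟩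
  set k := f.rootMultiplicity (ρ ^ n) with hk
  set q := f /ₘ (X - C (ρ ^ n)) ^ k with hqdef
  have hq : (X - C (ρ ^ n)) ^ k * q = f := pow_mul_divByMonic_rootMultiplicity_eq f (ρ ^ n)
  have hq0 : q.eval (ρ ^ n) ≠ 0 := eval_divByMonic_pow_rootMultiplicity_ne_zero (ρ ^ n) hf0
  have hcomp : f.comp (X ^ n) = (X ^ n - C (ρ ^ n)) ^ k * q.comp (X ^ n) := by
    conv_lhs => rw [← hq]
    simp [mul_comp, pow_comp, sub_comp]
  -- multiplicity of ρ in f ≤ multiplicity of ρ in f.comp (X^n)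
  have h1 : f.rootMultiplicity ρ ≤ (f.comp (X ^ n)).rootMultiplicity ρ := by
    rw [le_rootMultiplicity_iff hcomp0]
    exact dvd_trans (pow_rootMultiplicity_dvd f ρ) ⟨g, hg⟩
  -- the base factor has multiplicity exactly 1 at ρ
  have hbase0 : (X ^ n - C (ρ ^ n) : ℂ[X]) ≠ 0 := fun h => by
    have := congrArg (Polynomial.eval 0) h
    simp [zero_pow hn.ne', pow_ne_zero n hρ0] at this
  have hbaseroot : (X ^ n - C (ρ ^ n) : ℂ[X]).IsRoot ρ := by simp [IsRoot]
  have hbase : (X ^ n - C (ρ ^ n) : ℂ[X]).rootMultiplicity ρ = 1 := by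
    have hle : ¬ 1 < (X ^ n - C (ρ ^ n) : ℂ[X]).rootMultiplicity ρ := by
      rw [one_lt_rootMultiplicity_iff_isRoot hbase0]
      rintro ⟨-, hd⟩
      simp only [IsRoot, derivative_sub, derivative_C, sub_zero, derivative_X_pow,
        eval_mul, eval_pow, eval_natCast, eval_X, eval_C, mul_eq_zero, Nat.cast_eq_zero,
        pow_eq_zero_iff] at hd
      rcases hd with h | h
      · simp [hn.ne', hρ0] at h
      · exact pow_ne_zero _ hρ0 h
    have hpos : 0 < (X ^ n - C (ρ ^ n) : ℂ[X]).rootMultiplicity ρ :=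
      (rootMultiplicity_pos hbase0).mpr hbaseroot
    omega
  have hqcomp : (q.comp (X ^ n)).rootMultiplicity ρ = 0 := by
    apply rootMultiplicity_eq_zero
    simp [IsRoot, eval_comp, hq0]
  have h2 : (f.comp (X ^ n)).rootMultiplicity ρ = k := by
    rw [hcomp, rootMultiplicity_mul (hcomp ▸ hcomp0), hqcomp, add_zero,
      ← count_roots, roots_pow, Multiset.count_nsmul, count_roots, hbase, mul_one]
  omega
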